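/- Let P₁ = {u ∈ ℝⁿ : A¹u ≥ b¹} and P₂ = {u ∈ ℝⁿ : A²u ≥ b²} be nonempty polyhedra. An inequality γᵀu ≥ γ₀ is valid for P₁ ∪ P₂ (equivalently for conv(P₁ ∪ P₂)) if and only if there exist nonnegative multipliers β¹, β² with (A¹)ᵀβ¹ = γ, (A²)ᵀβ² = γ, (b¹)ᵀβ¹ ≥ γ₀, and (b²)ᵀβ² ≥ γ₀. -/

import Mathlib

open Matrix
open scoped InnerProductSpace

section Farkas

variable {N M : ℕ}

lemma cone_caratheodory (v : Fin M → EuclideanSpace ℝ (Fin N)) :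
    ∀ (s : Finset (Fin M)) (y : Fin M → ℝ), (∀ i, 0 ≤ y i) →
    ∃ t : Finset (Fin M), t ⊆ s ∧ LinearIndependent ℝ (fun i : t => v i) ∧
      ∃ z : Fin M → ℝ, (∀ i, 0 ≤ z i) ∧ ∑ i ∈ t, z i • v i = ∑ i ∈ s, y i • v i := by
  intro s
  induction s using Finset.strongInduction with
  | _ s ih =>
    intro y hy
    by_cases hli : LinearIndependent ℝ (fun i : s => v i)
    · exact ⟨s, le_refl _, hli, y, hy, rfl⟩
    · obtain ⟨g, hgsum, i₁, hgi₁⟩ := Fintype.not_linearIndependent_iff.mp hli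
      set g₁ : Fin M → ℝ := fun i => if h : i ∈ s then g ⟨i, h⟩ else 0 with hg₁
      have hg₁sum : ∑ i ∈ s, g₁ i • v i = 0 := by
        rw [← hgsum, ← Finset.sum_attach s (fun i => g₁ i • v i)]
        exact Finset.sum_congr rfl fun x _ => by simp [hg₁, x.2]
      have hg₁i₁ : g₁ (i₁ : Fin M) ≠ 0 := by simp [hg₁, i₁.2, hgi₁]
      obtain ⟨g', hg'0, hg'sum, j, hjs, hjpos⟩ :
          ∃ g' : Fin M → ℝ, (∀ i, i ∉ s → g' i = 0) ∧ (∑ i ∈ s, g' i • v i = 0) ∧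
            ∃ j, j ∈ s ∧ 0 < g' j := by
        rcases lt_or_gt_of_ne hg₁i₁ with h | h
        · exact ⟨-g₁, fun i hi => by simp [hg₁, hi], by simp [hg₁sum], i₁, i₁.2, by
            simpa using h⟩
        · exact ⟨g₁, fun i hi => by simp [hg₁, hi], hg₁sum, i₁, i₁.2, h⟩
      have hne : (s.filter (fun i => 0 < g' i)).Nonempty :=
        ⟨j, Finset.mem_filter.mpr ⟨hjs, hjpos⟩⟩
      obtain ⟨i₀, hi₀mem, hi₀min⟩ := Finset.exists_min_image _ (fun i => y i / g' i) hne
      obtain ⟨hi₀s, hi₀pos⟩ := Finset.mem_filter.mp hi₀mem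
      set lam := y i₀ / g' i₀ with hlam
      have hlam0 : 0 ≤ lam := div_nonneg (hy i₀) hi₀pos.le
      set y' : Fin M → ℝ := fun i => y i - lam * g' i with hy'
      have hy'0 : ∀ i, 0 ≤ y' i := by
        intro i
        by_cases his : i ∈ s
        · by_cases hpos : 0 < g' i
          · have hmin := hi₀min i (Finset.mem_filter.mpr ⟨his, hpos⟩)
            have h2 : lam * g' i ≤ y i := (le_div_iff₀ hpos).mp hmin
            simpa [hy', sub_nonneg] using h2
          · have h3 : 0 ≤ lam * (-(g' i)) :=
              mul_nonneg hlam0 (neg_nonneg.mpr (le_of_not_gt hpos))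
            have h4 := hy i
            simp only [hy']
            nlinarith
        · simp [hy', hg'0 i his, hy i]
      have hy'i₀ : y' i₀ = 0 := by
        show y i₀ - lam * g' i₀ = 0
        rw [hlam, div_mul_cancel₀ _ (ne_of_gt hi₀pos), sub_self]
      have hsum' : ∑ i ∈ s.erase i₀, y' i • v i = ∑ i ∈ s, y i • v i := by
        have h1 : ∑ i ∈ s.erase i₀, y' i • v i = ∑ i ∈ s, y' i • v i := by
          rw [← Finset.sum_erase_add s _ hi₀s]
          simp [hy'i₀]
        rw [h1]
        have h2 : ∑ i ∈ s, y' i • v i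
            = ∑ i ∈ s, y i • v i - lam • ∑ i ∈ s, g' i • v i := by
          rw [Finset.smul_sum, ← Finset.sum_sub_distrib]
          exact Finset.sum_congr rfl fun i _ => by simp [hy', sub_smul, smul_smul]
        rw [h2, hg'sum, smul_zero, sub_zero]
      obtain ⟨t, hts, htli, z, hz0, hzsum⟩ :=
        ih (s.erase i₀) (Finset.erase_ssubset hi₀s) y' hy'0
      exact ⟨t, hts.trans (Finset.erase_subset _ _), htli, z, hz0, by rw [hzsum, hsum']⟩

lemma fgCone_isClosed (v : Fin M → EuclideanSpace ℝ (Fin N)) :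
    IsClosed {x : EuclideanSpace ℝ (Fin N) |
      ∃ y : Fin M → ℝ, (∀ i, 0 ≤ y i) ∧ ∑ i, y i • v i = x} := by
  have key : {x : EuclideanSpace ℝ (Fin N) |
        ∃ y : Fin M → ℝ, (∀ i, 0 ≤ y i) ∧ ∑ i, y i • v i = x}
      = ⋃ t ∈ {t : Finset (Fin M) | LinearIndependent ℝ (fun i : t => v i)},
          (fun z : t → ℝ => ∑ i : t, z i • v i) '' {z : t → ℝ | ∀ i, 0 ≤ z i} := by
    ext x
    simp only [Set.mem_setOf_eq, Set.mem_iUnion, Set.mem_image]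
    constructor
    · rintro ⟨y, hy, rfl⟩
      obtain ⟨t, -, htli, z, hz0, hzsum⟩ := cone_caratheodory v Finset.univ y hy
      refine ⟨t, htli, fun i => z i, fun i => hz0 i, ?_⟩
      rw [← hzsum, ← Finset.sum_attach t (fun i => z i • v i), Finset.univ_eq_attach]
    · rintro ⟨t, htli, z, hz0, rfl⟩
      refine ⟨fun i => if h : i ∈ t then z ⟨i, h⟩ else 0, fun i => ?_, ?_⟩
      · by_cases h : i ∈ t
        · simpa [h] using hz0 ⟨i, h⟩
        · simp [h]
      · rw [← Finset.sum_subset (Finset.subset_univ t)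
          (fun i _ hi => by simp [hi]),
          ← Finset.sum_attach t
            (fun i => (if h : i ∈ t then z ⟨i, h⟩ else 0) • v i),
          Finset.univ_eq_attach]
        exact Finset.sum_congr rfl fun x _ => by simp [x.2]
  rw [key]
  refine Set.Finite.isClosed_biUnion (Set.toFinite _) (fun t ht => ?_)
  let L : (↥t → ℝ) →ₗ[ℝ] EuclideanSpace ℝ (Fin N) :=
    { toFun := fun z => ∑ i : t, z i • v i
      map_add' := fun a b => by simp [add_smul, Finset.sum_add_distrib]
      map_smul' := fun c a => by simp [smul_smul, Finset.smul_sum] }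
  have hker : LinearMap.ker L = ⊥ := by
    rw [LinearMap.ker_eq_bot']
    intro z hz
    have := Fintype.linearIndependent_iff.mp ht z hz
    funext i; exact this i
  have hclosed : IsClosed {z : ↥t → ℝ | ∀ i, 0 ≤ z i} := by
    have : {z : ↥t → ℝ | ∀ i, 0 ≤ z i}
        = ⋂ i, {z : ↥t → ℝ | 0 ≤ z i} := by
      ext z; simp [Set.mem_iInter]
    rw [this]
    exact isClosed_iInter fun i => isClosed_le continuous_const (continuous_apply i)
  exact (L.isClosedEmbedding_of_injective hker).isClosedMap _ hclosed

/-- Homogeneous Farkas lemma. -/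
lemma farkas (v : Fin M → EuclideanSpace ℝ (Fin N)) (c : EuclideanSpace ℝ (Fin N))
    (h : ∀ x : EuclideanSpace ℝ (Fin N), (∀ i, 0 ≤ ⟪v i, x⟫_ℝ) → 0 ≤ ⟪c, x⟫_ℝ) :
    ∃ y : Fin M → ℝ, (∀ i, 0 ≤ y i) ∧ ∑ i, y i • v i = c := by
  by_contra hc
  -- the finitely generated cone as a ConvexCone
  let K : ConvexCone ℝ (EuclideanSpace ℝ (Fin N)) :=
    { carrier := {x | ∃ y : Fin M → ℝ, (∀ i, 0 ≤ y i) ∧ ∑ i, y i • v i = x}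
      smul_mem' := by
        rintro c hc x ⟨y, hy, rfl⟩
        exact ⟨fun i => c • y i, fun i => mul_nonneg hc.le (hy i), by
          simp [Finset.smul_sum, smul_smul]⟩
      add_mem' := by
        rintro x ⟨y, hy, rfl⟩ x' ⟨y', hy', rfl⟩
        exact ⟨fun i => y i + y' i, fun i => add_nonneg (hy i) (hy' i), by
          simp [add_smul, Finset.sum_add_distrib]⟩ }
  have hcK : c ∉ K := by
    intro hmem
    exact hc hmem
  have hne : (K : Set (EuclideanSpace ℝ (Fin N))).Nonempty :=
    ⟨0, ⟨0, fun i => le_refl 0, by simp⟩⟩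
  let P : ProperCone ℝ (EuclideanSpace ℝ (Fin N)) :=
    { carrier := (K : Set (EuclideanSpace ℝ (Fin N)))
      add_mem' := fun ha hb => K.add_mem' ha hb
      zero_mem' := ⟨0, fun i => le_refl 0, by simp⟩
      smul_mem' := by
        rintro c x ⟨y, hy, rfl⟩
        exact ⟨fun i => (c : ℝ) * y i, fun i => mul_nonneg c.2 (hy i), by
          rw [Finset.smul_sum]; exact Finset.sum_congr rfl fun i _ => by rw [mul_smul]; rfl⟩
      isClosed' := fgCone_isClosed v }
  obtain ⟨x, hx1, hx2⟩ :=
    ProperCone.hyperplane_separation' P (x₀ := c) hcK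
  have hvx : ∀ i, 0 ≤ ⟪v i, x⟫_ℝ := by
    intro i
    refine hx1 (v i) ⟨fun i' => if i' = i then 1 else 0, fun i' => by positivity, ?_⟩
    simp [ite_smul]
  have := h x hvx
  rw [real_inner_comm] at this
  linarith [real_inner_comm x c]

end Farkas

lemma inner_eq_dot {n : ℕ} (x y : EuclideanSpace ℝ (Fin n)) : ⟪x, y⟫_ℝ = x ⬝ᵥ y := by
  simp [PiLp.inner_apply, RCLike.inner_apply, dotProduct, mul_comm]

/-- Affine Farkas lemma / LP duality: if the polyhedron `{u : A u ≥ b}` is nonempty and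
`γᵀu ≥ γ₀` holds on it, then there are nonnegative multipliers certifying this. -/
lemma affine_farkas {m n : ℕ} (A : Matrix (Fin m) (Fin n) ℝ) (b : Fin m → ℝ)
    (γ : Fin n → ℝ) (γ0 : ℝ)
    (hfeas : ∃ u : Fin n → ℝ, ∀ i, b i ≤ (A *ᵥ u) i)
    (hval : ∀ u : Fin n → ℝ, (∀ i, b i ≤ (A *ᵥ u) i) → γ0 ≤ γ ⬝ᵥ u) :
    ∃ β : Fin m → ℝ, (∀ i, 0 ≤ β i) ∧ Aᵀ *ᵥ β = γ ∧ γ0 ≤ b ⬝ᵥ β := by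
  classical
  obtain ⟨u₀, hu₀⟩ := hfeas
  -- homogenization: vectors in ℝ^{n+1}
  set v : Fin (m + 1) → EuclideanSpace ℝ (Fin (n + 1)) :=
    Fin.snoc (fun i : Fin m => WithLp.toLp 2 (Fin.snoc (A i) (-b i) : Fin (n + 1) → ℝ))
      (WithLp.toLp 2 (Fin.snoc 0 1 : Fin (n + 1) → ℝ)) with hv
  set c : EuclideanSpace ℝ (Fin (n + 1)) :=
    WithLp.toLp 2 (Fin.snoc γ (-γ0) : Fin (n + 1) → ℝ) with hc
  have hsnoc_dot : ∀ (a : Fin n → ℝ) (α : ℝ) (x : Fin (n + 1) → ℝ),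
      (Fin.snoc a α : Fin (n + 1) → ℝ) ⬝ᵥ x
        = a ⬝ᵥ (fun j => x j.castSucc) + α * x (Fin.last n) := by
    intro a α x
    rw [dotProduct, Fin.sum_univ_castSucc]
    simp [dotProduct]
  have hmain : ∀ x : EuclideanSpace ℝ (Fin (n + 1)),
      (∀ i, 0 ≤ ⟪v i, x⟫_ℝ) → 0 ≤ ⟪c, x⟫_ℝ := by
    intro x hx
    set u : Fin n → ℝ := fun j => x j.castSucc with hu
    set t : ℝ := x (Fin.last n) with ht
    have htpos : 0 ≤ t := by
      have := hx (Fin.last m)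
      rw [inner_eq_dot] at this
      simpa [hv, hsnoc_dot] using this
    have hrow : ∀ i : Fin m, b i * t ≤ A i ⬝ᵥ u := by
      intro i
      have := hx i.castSucc
      rw [inner_eq_dot] at this
      simp only [hv, Fin.snoc_castSucc, hsnoc_dot] at this
      linarith
    rw [inner_eq_dot, hc, hsnoc_dot]
    rcases eq_or_lt_of_le htpos with h0 | h0
    · -- t = 0 : recession direction
      have hAu : ∀ i, 0 ≤ A i ⬝ᵥ u := by
        intro i; have := hrow i; rw [← h0] at this; linarith
      have hγu : 0 ≤ γ ⬝ᵥ u := by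
        by_contra hneg
        push_neg at hneg
        set lam : ℝ := (γ ⬝ᵥ u₀ - γ0 + 1) / (-(γ ⬝ᵥ u)) with hlam
        have hbase : γ0 ≤ γ ⬝ᵥ u₀ := hval u₀ hu₀
        have hlam0 : 0 ≤ lam := by
          apply div_nonneg <;> linarith
        have hfeas' : ∀ i, b i ≤ (A *ᵥ (u₀ + lam • u)) i := by
          intro i
          have h1 : (A *ᵥ (u₀ + lam • u)) i = (A *ᵥ u₀) i + lam * (A i ⬝ᵥ u) := by
            simp [mulVec_add, mulVec_smul, mulVec, smul_eq_mul]
          rw [h1]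
          have := mul_nonneg hlam0 (hAu i)
          have := hu₀ i
          linarith
        have hval' := hval _ hfeas'
        have h2 : γ ⬝ᵥ (u₀ + lam • u) = γ ⬝ᵥ u₀ + lam * (γ ⬝ᵥ u) := by
          simp [dotProduct_add, dotProduct_smul, smul_eq_mul]
        have hkey : lam * (γ ⬝ᵥ u) = -(γ ⬝ᵥ u₀ - γ0 + 1) := by
          have hne : γ ⬝ᵥ u ≠ 0 := hneg.ne
          rw [hlam, div_mul_eq_mul_div, div_neg, mul_div_assoc, div_self hne, mul_one]
        rw [h2] at hval'
        linarith
      have hx0 : x (Fin.last n) = 0 := by rw [← ht, ← h0]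
      rw [← hu, hx0]
      simpa using hγu
    · -- t > 0 : scale
      have hfeas' : ∀ i, b i ≤ (A *ᵥ (t⁻¹ • u)) i := by
        intro i
        have h1 : (A *ᵥ (t⁻¹ • u)) i = t⁻¹ * (A i ⬝ᵥ u) := by
          simp [mulVec_smul, mulVec, smul_eq_mul]
        rw [h1, ← div_eq_inv_mul, le_div_iff₀ h0]
        exact hrow i
      have hval' := hval _ hfeas'
      have h2 : γ ⬝ᵥ (t⁻¹ • u) = t⁻¹ * (γ ⬝ᵥ u) := by
        simp [dotProduct_smul, smul_eq_mul]
      rw [h2, ← div_eq_inv_mul, le_div_iff₀ h0] at hval'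
      rw [← hu, ← ht]
      nlinarith
  obtain ⟨y, hy0, hysum⟩ := farkas v c hmain
  refine ⟨fun i => y i.castSucc, fun i => hy0 _, ?_, ?_⟩
  · funext j
    have := congrArg (fun w => w j.castSucc) hysum
    rw [WithLp.ofLp_sum, Finset.sum_apply] at this
    simp only [PiLp.smul_apply, smul_eq_mul] at this
    rw [Fin.sum_univ_castSucc] at this
    simp only [hv, hc, Fin.snoc_castSucc, Fin.snoc_last] at this
    simp only [Pi.zero_apply, mul_zero, add_zero] at this
    rw [mulVec]
    rw [← this]
    simp [dotProduct, transpose_apply, mul_comm]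
  · have := congrArg (fun w => w (Fin.last n)) hysum
    rw [WithLp.ofLp_sum, Finset.sum_apply] at this
    simp only [PiLp.smul_apply, smul_eq_mul] at this
    rw [Fin.sum_univ_castSucc] at this
    simp only [hv, hc, Fin.snoc_castSucc, Fin.snoc_last] at this
    have hbd : b ⬝ᵥ (fun i => y i.castSucc) = γ0 + y (Fin.last m) := by
      have h3 : ∑ i : Fin m, y i.castSucc * (-(b i)) = -(b ⬝ᵥ fun i => y i.castSucc) := by
        simp [dotProduct, mul_comm, Finset.sum_neg_distrib]
      rw [h3] at this
      linarith [this]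
    rw [hbd]
    linarith [hy0 (Fin.last m)]


open Matrix

/-- Balas' characterization: an inequality `γᵀu ≥ γ₀` is valid for the union of two
nonempty polyhedra `P₁ = {u : A¹u ≥ b¹}`, `P₂ = {u : A²u ≥ b²}` iff there are
nonnegative multipliers `β¹, β²` with `(Aʳ)ᵀβʳ = γ` and `(bʳ)ᵀβʳ ≥ γ₀`. -/
theorem disjunctive_valid_inequality_characterization
    (n m₁ m₂ : ℕ)
    (A1 : Matrix (Fin m₁) (Fin n) ℝ) (A2 : Matrix (Fin m₂) (Fin n) ℝ)
    (b1 : Fin m₁ → ℝ) (b2 : Fin m₂ → ℝ)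
    (hP1 : ∃ u : Fin n → ℝ, ∀ i, b1 i ≤ (A1 *ᵥ u) i)
    (hP2 : ∃ u : Fin n → ℝ, ∀ i, b2 i ≤ (A2 *ᵥ u) i)
    (γ : Fin n → ℝ) (γ0 : ℝ) :
    (∀ u : Fin n → ℝ,
        ((∀ i, b1 i ≤ (A1 *ᵥ u) i) ∨ (∀ i, b2 i ≤ (A2 *ᵥ u) i)) → γ0 ≤ γ ⬝ᵥ u) ↔
    (∃ (β1 : Fin m₁ → ℝ) (β2 : Fin m₂ → ℝ),
        (∀ i, 0 ≤ β1 i) ∧ (∀ i, 0 ≤ β2 i) ∧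
        A1ᵀ *ᵥ β1 = γ ∧ A2ᵀ *ᵥ β2 = γ ∧
        γ0 ≤ b1 ⬝ᵥ β1 ∧ γ0 ≤ b2 ⬝ᵥ β2) := by
  constructor
  · intro hvalid
    obtain ⟨β1, hβ1, hA1, hb1⟩ :=
      affine_farkas A1 b1 γ γ0 hP1 (fun u hu => hvalid u (Or.inl hu))
    obtain ⟨β2, hβ2, hA2, hb2⟩ :=
      affine_farkas A2 b2 γ γ0 hP2 (fun u hu => hvalid u (Or.inr hu))
    exact ⟨β1, β2, hβ1, hβ2, hA1, hA2, hb1, hb2⟩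
  · rintro ⟨β1, β2, hβ1, hβ2, hA1, hA2, hb1, hb2⟩ u hu
    have key : ∀ {m : ℕ} (A : Matrix (Fin m) (Fin n) ℝ) (b : Fin m → ℝ) (β : Fin m → ℝ),
        (∀ i, 0 ≤ β i) → Aᵀ *ᵥ β = γ → γ0 ≤ b ⬝ᵥ β →
        (∀ i, b i ≤ (A *ᵥ u) i) → γ0 ≤ γ ⬝ᵥ u := by
      intro m A b β hβ hA hb hfu
      have h1 : γ ⬝ᵥ u = β ⬝ᵥ (A *ᵥ u) := by
        rw [← hA, mulVec_transpose, ← dotProduct_mulVec]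
      have h2 : β ⬝ᵥ b ≤ β ⬝ᵥ (A *ᵥ u) := by
        simp only [dotProduct]
        exact Finset.sum_le_sum fun i _ => mul_le_mul_of_nonneg_left (hfu i) (hβ i)
      rw [dotProduct_comm b β] at hb
      rw [h1]
      linarith
    rcases hu with h | h
    · exact key A1 b1 β1 hβ1 hA1 hb1 h
    · exact key A2 b2 β2 hβ2 hA2 hb2 h
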